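/- Suppose operators A(x), B(x) on a vector space satisfy, for all x₁ ≠ x₂ (with b(x₂−x₁) ≠ 0), the relation A(x₁)B(x₂) = (a(x₂−x₁)/b(x₂−x₁)) B(x₂)A(x₁) − (c(x₂−x₁)/b(x₂−x₁)) B(x₁)A(x₂), and B(x₁)B(x₂) = B(x₂)B(x₁). Then for distinct λ₀, λ₁, ..., λₙ one has A(λ₀)·B(λ₁)···B(λₙ) = (∏_{j=1}^n a(λⱼ−λ₀)/b(λⱼ−λ₀)) B(λ₁)···B(λₙ)A(λ₀) − Σ_{i=1}^n (c(λᵢ−λ₀)/b(λᵢ−λ₀)) (∏_{j≠i} a(λⱼ−λᵢ)/b(λⱼ−λᵢ)) B(λ₀)(∏_{j≠i} B(λⱼ)) A(λᵢ). -/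

import Mathlib

open Finset Complex

private lemma key_sinh (γ u v : ℂ) :
    Complex.sinh (v - u + γ) * Complex.sinh v
      = Complex.sinh (v + γ) * Complex.sinh (v - u) + Complex.sinh γ * Complex.sinh u := by
  simp only [Complex.sinh_add, Complex.sinh_sub, Complex.cosh_sub]
  linear_combination Complex.sinh γ * Complex.sinh u * (Complex.cosh_sq_sub_sinh_sq v)

private lemma coef_id (γ u v : ℂ) (hu : Complex.sinh u ≠ 0) (hv : Complex.sinh v ≠ 0)
    (hvu : Complex.sinh (v - u) ≠ 0) :
    Complex.sinh γ / Complex.sinh u * (Complex.sinh (v - u + γ) / Complex.sinh (v - u))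
      = Complex.sinh (v + γ) / Complex.sinh v * (Complex.sinh γ / Complex.sinh u)
        - Complex.sinh γ / Complex.sinh v * (Complex.sinh γ / Complex.sinh (u - v)) := by
  rw [show u - v = -(v - u) by ring, Complex.sinh_neg]
  field_simp
  linear_combination (Complex.sinh γ) *
    key_sinh γ u v

private lemma aux_yb {V : Type*} [AddCommGroup V] [Module ℂ V]
    (γ : ℂ) (A B : ℂ → Module.End ℂ V)
    (hBB : ∀ x₁ x₂, Commute (B x₁) (B x₂))
    (hAB : ∀ x₁ x₂, Complex.sinh (x₂ - x₁) ≠ 0 →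
      A x₁ * B x₂
        = (Complex.sinh (x₂ - x₁ + γ) / Complex.sinh (x₂ - x₁)) • (B x₂ * A x₁)
          - (Complex.sinh γ / Complex.sinh (x₂ - x₁)) • (B x₁ * A x₂))
    {ι : Type*} [DecidableEq ι] (l : ι → ℂ) (s : Finset ι) :
    ∀ x₀ : ℂ, (∀ j ∈ s, Complex.sinh (l j - x₀) ≠ 0) →
      (∀ i ∈ s, ∀ j ∈ s, i ≠ j → Complex.sinh (l j - l i) ≠ 0) →
      A x₀ * s.noncommProd (fun j => B (l j)) (fun p _ q _ _ => hBB (l p) (l q))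
        = (∏ j ∈ s, Complex.sinh (l j - x₀ + γ) / Complex.sinh (l j - x₀)) •
            (s.noncommProd (fun j => B (l j)) (fun p _ q _ _ => hBB (l p) (l q)) * A x₀)
          - ∑ i ∈ s, ((Complex.sinh γ / Complex.sinh (l i - x₀))
                * ∏ j ∈ s.erase i, Complex.sinh (l j - l i + γ) / Complex.sinh (l j - l i)) •
              (B x₀ * (s.erase i).noncommProd (fun j => B (l j)) (fun p _ q _ _ => hBB (l p) (l q))
                * A (l i)) := by
  induction s using Finset.induction_on with
  | empty => intro x₀ _ _; simp [show (∅ : Finset ι).noncommProd (fun j => B (l j))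
      (fun p _ q _ _ => hBB (l p) (l q)) = 1 from rfl]
  | @insert k t hk ih =>
    intro x₀ hb hsep
    have hkt : ∀ j ∈ t, k ≠ j := fun j hj h => hk (h ▸ hj)
    have hb0k : Complex.sinh (l k - x₀) ≠ 0 := hb k (Finset.mem_insert_self k t)
    have hbt : ∀ j ∈ t, Complex.sinh (l j - x₀) ≠ 0 :=
      fun j hj => hb j (Finset.mem_insert_of_mem hj)
    have hsept : ∀ i ∈ t, ∀ j ∈ t, i ≠ j → Complex.sinh (l j - l i) ≠ 0 :=
      fun i hi j hj hij =>
        hsep i (Finset.mem_insert_of_mem hi) j (Finset.mem_insert_of_mem hj) hij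
    have hbk : ∀ j ∈ t, Complex.sinh (l j - l k) ≠ 0 :=
      fun j hj => hsep k (Finset.mem_insert_self k t) j (Finset.mem_insert_of_mem hj) (hkt j hj)
    have hks : ∀ i ∈ t, Complex.sinh (l k - l i) ≠ 0 :=
      fun i hi => hsep i (Finset.mem_insert_of_mem hi) k (Finset.mem_insert_self k t)
        (fun h => hk (h ▸ hi))
    have IH0 := ih x₀ hbt hsept
    have IHk := ih (l k) hbk hsept
    rw [Finset.noncommProd_insert_of_notMem t k (fun j => B (l j)) (fun p _ q _ _ => hBB (l p) (l q)) hk]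
    rw [Finset.prod_insert hk,
      Finset.sum_insert hk, Finset.erase_insert hk]
    have hsum : ∑ i ∈ t, ((Complex.sinh γ / Complex.sinh (l i - x₀))
                * ∏ j ∈ (insert k t).erase i,
                    Complex.sinh (l j - l i + γ) / Complex.sinh (l j - l i)) •
              (B x₀ * ((insert k t).erase i).noncommProd (fun j => B (l j))
                  (fun p _ q _ _ => hBB (l p) (l q)) * A (l i))
        = ∑ i ∈ t, ((Complex.sinh γ / Complex.sinh (l i - x₀))
                * ((Complex.sinh (l k - l i + γ) / Complex.sinh (l k - l i))
                  * ∏ j ∈ t.erase i, Complex.sinh (l j - l i + γ) / Complex.sinh (l j - l i))) •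
              (B x₀ * (B (l k) * (t.erase i).noncommProd (fun j => B (l j))
                  (fun p _ q _ _ => hBB (l p) (l q))) * A (l i)) := by
      refine Finset.sum_congr rfl fun i hi => ?_
      have hik : i ≠ k := fun h => hk (h ▸ hi)
      have hke : k ∉ t.erase i := fun h => hk (Finset.mem_of_mem_erase h)
      rw [Finset.erase_insert_of_ne (hkt i hi), Finset.prod_insert hke]
      rw [Finset.noncommProd_insert_of_notMem (t.erase i) k (fun j => B (l j))
        (fun p _ q _ _ => hBB (l p) (l q)) hke]
    rw [hsum, ← mul_assoc, hAB x₀ (l k) hb0k, sub_mul, smul_mul_assoc, smul_mul_assoc,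
      mul_assoc, mul_assoc, IH0, IHk]
    simp only [mul_sub, Finset.mul_sum, mul_smul_comm, smul_sub, smul_smul, Finset.smul_sum,
      mul_assoc]
    have hBc : ∀ Z : Module.End ℂ V, B (l k) * (B x₀ * Z) = B x₀ * (B (l k) * Z) :=
      fun Z => by rw [← mul_assoc, (hBB (l k) x₀).eq, mul_assoc]
    have h3 : ∑ x ∈ t,
          (Complex.sinh γ / Complex.sinh (l x - x₀) *
              (Complex.sinh (l k - l x + γ) / Complex.sinh (l k - l x) *
                ∏ j ∈ t.erase x, Complex.sinh (l j - l x + γ) / Complex.sinh (l j - l x))) •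
            (B x₀ * (B (l k) * ((t.erase x).noncommProd (fun j => B (l j))
                (fun p _ q _ _ => hBB (l p) (l q)) * A (l x))))
      = ∑ x ∈ t,
          ((Complex.sinh (l k - x₀ + γ) / Complex.sinh (l k - x₀) *
              (Complex.sinh γ / Complex.sinh (l x - x₀) *
                ∏ j ∈ t.erase x, Complex.sinh (l j - l x + γ) / Complex.sinh (l j - l x))) •
            (B (l k) * (B x₀ * ((t.erase x).noncommProd (fun j => B (l j))
                (fun p _ q _ _ => hBB (l p) (l q)) * A (l x))))
          - (Complex.sinh γ / Complex.sinh (l k - x₀) *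
              (Complex.sinh γ / Complex.sinh (l x - l k) *
                ∏ j ∈ t.erase x, Complex.sinh (l j - l x + γ) / Complex.sinh (l j - l x))) •
            (B x₀ * (B (l k) * ((t.erase x).noncommProd (fun j => B (l j))
                (fun p _ q _ _ => hBB (l p) (l q)) * A (l x))))) := by
      refine Finset.sum_congr rfl fun i hi => ?_
      rw [hBc, ← sub_smul]
      congr 1
      have hvu : Complex.sinh (l k - x₀ - (l i - x₀)) ≠ 0 := by
        rw [show l k - x₀ - (l i - x₀) = l k - l i by ring]; exact hks i hi
      have hci := coef_id γ (l i - x₀) (l k - x₀) (hbt i hi) hb0k hvu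
      rw [show l k - x₀ - (l i - x₀) = l k - l i by ring,
        show l i - x₀ - (l k - x₀) = l i - l k by ring] at hci
      linear_combination
        (∏ j ∈ t.erase i, Complex.sinh (l j - l i + γ) / Complex.sinh (l j - l i)) * hci
    rw [h3, Finset.sum_sub_distrib]
    abel

/-- Degree-`(n+1)` Yang–Baxter relation for `A`: if `A(x), B(x)` satisfy the two-point
exchange relations of the Yang–Baxter algebra of the six-vertex model
(`a(x) = sinh(x+γ)`, `b(x) = sinh x`, `c(x) = sinh γ`), then
`A(x₀) B(λ₁)⋯B(λₙ) = (∏ⱼ a(λⱼ−x₀)/b(λⱼ−x₀)) B(λ₁)⋯B(λₙ) A(x₀)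
  − Σᵢ (c(λᵢ−x₀)/b(λᵢ−x₀)) (∏_{j≠i} a(λⱼ−λᵢ)/b(λⱼ−λᵢ)) B(x₀) (∏_{j≠i} B(λⱼ)) A(λᵢ)`. -/
theorem yang_baxter_higher_degree_A {V : Type*} [AddCommGroup V] [Module ℂ V]
    (γ : ℂ) (A B : ℂ → Module.End ℂ V)
    (hBB : ∀ x₁ x₂, Commute (B x₁) (B x₂))
    (hAB : ∀ x₁ x₂, Complex.sinh (x₂ - x₁) ≠ 0 →
      A x₁ * B x₂
        = (Complex.sinh (x₂ - x₁ + γ) / Complex.sinh (x₂ - x₁)) • (B x₂ * A x₁)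
          - (Complex.sinh γ / Complex.sinh (x₂ - x₁)) • (B x₁ * A x₂))
    (n : ℕ) (x₀ : ℂ) (l : Fin n → ℂ)
    (hb0 : ∀ j, Complex.sinh (l j - x₀) ≠ 0)
    (hbij : ∀ i j, i ≠ j → Complex.sinh (l j - l i) ≠ 0) :
    A x₀ * Finset.univ.noncommProd (fun j => B (l j)) (fun p _ q _ _ => hBB (l p) (l q))
      = (∏ j, Complex.sinh (l j - x₀ + γ) / Complex.sinh (l j - x₀)) •
          (Finset.univ.noncommProd (fun j => B (l j)) (fun p _ q _ _ => hBB (l p) (l q))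
            * A x₀)
        - ∑ i, ((Complex.sinh γ / Complex.sinh (l i - x₀))
              * ∏ j ∈ Finset.univ.erase i,
                  Complex.sinh (l j - l i + γ) / Complex.sinh (l j - l i)) •
            (B x₀
              * (Finset.univ.erase i).noncommProd (fun j => B (l j))
                  (fun p _ q _ _ => hBB (l p) (l q))
              * A (l i)) := by
  exact aux_yb γ A B hBB hAB l Finset.univ x₀ (fun j _ => hb0 j)
    (fun i _ j _ hij => hbij i j hij)
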